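/- Let A be a unital C*-algebra in which every self-adjoint element is a norm limit of real linear combinations of projections (the LP property). Then for every n ≥ 1, the matrix algebra Mₙ(A) also has the LP property. -/

import Mathlib

/-- A topological star algebra has the LP property if the linear span of its
projections (self-adjoint idempotents) is dense. -/
def LPProperty (A : Type*) [NonUnitalRing A] [Star A] [Module ℂ A]
    [TopologicalSpace A] : Prop :=
  Dense (↑(Submodule.span ℂ {p : A | IsSelfAdjoint p ∧ IsIdempotentElem p}) : Set A)

namespace LPAux

open Matrix

variable {A : Type*} [CStarAlgebra A] {n : ℕ}

/-- star of a single-entry matrix. -/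
lemma star_stdBasisMatrix (i j : Fin n) (a : A) :
    star (Matrix.single i j a) = Matrix.single j i (star a) := by
  ext k l
  simp only [Matrix.star_apply, Matrix.single, of_apply]
  rw [apply_ite star, star_zero]
  exact if_congr and_comm rfl rfl

/-- The single-entry map as a continuous linear map. -/
noncomputable def E (i j : Fin n) : A →L[ℂ] Matrix (Fin n) (Fin n) A where
  toFun a := Matrix.single i j a
  map_add' a b := single_add i j a b
  map_smul' c a := (smul_single c i j a).symm
  cont := by
    apply continuous_matrix
    intro k l
    simp only [Matrix.single, of_apply]
    split
    · exact continuous_id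
    · exact continuous_const

lemma E_apply (i j : Fin n) (a : A) : E i j a = Matrix.single i j a := rfl

/-- The basic off-diagonal projection. -/
lemma proj_block {i j : Fin n} (hij : i ≠ j) {p : A} (hp1 : IsSelfAdjoint p)
    (hp2 : IsIdempotentElem p) (c : ℂ) (hc : star c * c = 1) :
    IsSelfAdjoint ((1/2 : ℂ) • (E i i p + c • E i j p + star c • E j i p + E j j p)) ∧
    IsIdempotentElem ((1/2 : ℂ) • (E i i p + c • E i j p + star c • E j i p + E j j p)) := by
  have hcc : c * star c = 1 := by rw [mul_comm]; exact hc
  have hp2' : p * p = p := hp2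
  have hXX : (E i i p : Matrix (Fin n) (Fin n) A) * E i i p = E i i p := by
    simp [E_apply, single_mul_single_same, hp2']
  have hXY : (E i i p : Matrix (Fin n) (Fin n) A) * E i j p = E i j p := by
    simp [E_apply, single_mul_single_same, hp2']
  have hYZ : (E i j p : Matrix (Fin n) (Fin n) A) * E j i p = E i i p := by
    simp [E_apply, single_mul_single_same, hp2']
  have hYW : (E i j p : Matrix (Fin n) (Fin n) A) * E j j p = E i j p := by
    simp [E_apply, single_mul_single_same, hp2']
  have hZX : (E j i p : Matrix (Fin n) (Fin n) A) * E i i p = E j i p := by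
    simp [E_apply, single_mul_single_same, hp2']
  have hZY : (E j i p : Matrix (Fin n) (Fin n) A) * E i j p = E j j p := by
    simp [E_apply, single_mul_single_same, hp2']
  have hWZ : (E j j p : Matrix (Fin n) (Fin n) A) * E j i p = E j i p := by
    simp [E_apply, single_mul_single_same, hp2']
  have hWW : (E j j p : Matrix (Fin n) (Fin n) A) * E j j p = E j j p := by
    simp [E_apply, single_mul_single_same, hp2']
  have hXZ : (E i i p : Matrix (Fin n) (Fin n) A) * E j i p = 0 := by
    simp [E_apply, single_mul_single_of_ne, hij]
  have hXW : (E i i p : Matrix (Fin n) (Fin n) A) * E j j p = 0 := by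
    simp [E_apply, single_mul_single_of_ne, hij]
  have hYX : (E i j p : Matrix (Fin n) (Fin n) A) * E i i p = 0 := by
    simp [E_apply, single_mul_single_of_ne, hij.symm]
  have hYY : (E i j p : Matrix (Fin n) (Fin n) A) * E i j p = 0 := by
    simp [E_apply, single_mul_single_of_ne, hij.symm]
  have hZZ : (E j i p : Matrix (Fin n) (Fin n) A) * E j i p = 0 := by
    simp [E_apply, single_mul_single_of_ne, hij]
  have hZW : (E j i p : Matrix (Fin n) (Fin n) A) * E j j p = 0 := by
    simp [E_apply, single_mul_single_of_ne, hij]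
  have hWX : (E j j p : Matrix (Fin n) (Fin n) A) * E i i p = 0 := by
    simp [E_apply, single_mul_single_of_ne, hij.symm]
  have hWY : (E j j p : Matrix (Fin n) (Fin n) A) * E i j p = 0 := by
    simp [E_apply, single_mul_single_of_ne, hij.symm]
  have hp1' : star p = p := hp1
  constructor
  · show star _ = _
    rw [star_smul, star_add, star_add, star_add, star_smul, star_smul]
    simp only [E_apply, star_stdBasisMatrix, hp1', star_star]
    rw [show star (1/2 : ℂ) = 1/2 by norm_num]
    module
  · show _ * _ = _
    simp only [smul_mul_assoc, mul_smul_comm, add_mul, mul_add, smul_smul,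
      smul_add, hXX, hXY, hXZ, hXW, hYX, hYY, hYZ, hYW, hZX, hZY, hZZ, hZW,
      hWX, hWY, hWZ, hWW, smul_zero, add_zero, zero_add]
    rw [show (1/2 : ℂ) * (1/2 * c) = (1/2) * (c * (1/2)) by ring]
    match_scalars <;> ring_nf <;>
      first
        | rfl
        | (rw [mul_comm c (star c), hc]; ring)
        | (rw [hc]; ring)

end LPAux

open LPAux Matrix in
/-- If a unital C*-algebra `A` has the LP property, then so does
`Mₙ(A)` for every `n ≥ 1`. -/
theorem linear_span_stmt12 {A : Type*} [CStarAlgebra A] (n : ℕ) (hn : 1 ≤ n)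
    (hA : LPProperty A) : LPProperty (Matrix (Fin n) (Fin n) A) := by
  set M := Matrix (Fin n) (Fin n) A
  set SM : Set M := {p : M | IsSelfAdjoint p ∧ IsIdempotentElem p} with hSM
  set SA : Set A := {p : A | IsSelfAdjoint p ∧ IsIdempotentElem p} with hSA
  -- projections map into the span
  have key : ∀ (i j : Fin n) (p : A), p ∈ SA →
      (E i j p : M) ∈ Submodule.span ℂ SM := by
    intro i j p hp
    obtain ⟨hp1, hp2⟩ := hp
    rcases eq_or_ne i j with rfl | hij
    · apply Submodule.subset_span
      refine ⟨?_, ?_⟩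
      · show star _ = _
        rw [E_apply, star_stdBasisMatrix]
        rw [hp1.star_eq]
      · show _ * _ = _
        rw [E_apply, single_mul_single_same, hp2.eq]
    · -- use the two families of projections
      have h1 := proj_block hij hp1 hp2 1 (by norm_num)
      have h2 := proj_block hij hp1 hp2 (-1) (by norm_num)
      have h3 := proj_block hij hp1 hp2 Complex.I (by simp [Complex.star_def, Complex.conj_I,
        Complex.I_mul_I])
      have h4 := proj_block hij hp1 hp2 (-Complex.I) (by simp [Complex.star_def, Complex.conj_I,
        Complex.I_mul_I])
      have m1 : ((1/2 : ℂ) • (E i i p + (1:ℂ) • E i j p + star (1:ℂ) • E j i p + E j j p) : M)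
          ∈ Submodule.span ℂ SM := Submodule.subset_span ⟨h1.1, h1.2⟩
      have m2 : ((1/2 : ℂ) • (E i i p + (-1:ℂ) • E i j p + star (-1:ℂ) • E j i p + E j j p) : M)
          ∈ Submodule.span ℂ SM := Submodule.subset_span ⟨h2.1, h2.2⟩
      have m3 : ((1/2 : ℂ) • (E i i p + Complex.I • E i j p + star Complex.I • E j i p + E j j p) : M)
          ∈ Submodule.span ℂ SM := Submodule.subset_span ⟨h3.1, h3.2⟩
      have m4 : ((1/2 : ℂ) • (E i i p + (-Complex.I) • E i j p + star (-Complex.I) • E j i p + E j j p) : M)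
          ∈ Submodule.span ℂ SM := Submodule.subset_span ⟨h4.1, h4.2⟩
      -- E i j p = (1/2)•((m1 - m2) + (-I)•(m3 - m4))
      have comb : (E i j p : M) = (1/2 : ℂ) •
          (((1/2 : ℂ) • (E i i p + (1:ℂ) • E i j p + star (1:ℂ) • E j i p + E j j p)
            - (1/2 : ℂ) • (E i i p + (-1:ℂ) • E i j p + star (-1:ℂ) • E j i p + E j j p))
          + (-Complex.I) •
            ((1/2 : ℂ) • (E i i p + Complex.I • E i j p + star Complex.I • E j i p + E j j p)
             - (1/2 : ℂ) • (E i i p + (-Complex.I) • E i j p + star (-Complex.I) • E j i p + E j j p))) := by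
        simp only [star_one, star_neg, Complex.star_def, Complex.conj_I]
        match_scalars <;> simp [Complex.I_sq] <;> ring_nf <;> norm_num
      rw [comb]
      exact Submodule.smul_mem _ _ (Submodule.add_mem _ (Submodule.sub_mem _ m1 m2)
        (Submodule.smul_mem _ _ (Submodule.sub_mem _ m3 m4)))
  -- continuous linear maps carry density
  have aux : ∀ (i j : Fin n) (a : A), (E i j a : M) ∈ closure (↑(Submodule.span ℂ SM) : Set M) := by
    intro i j a
    have h1 : a ∈ closure (↑(Submodule.span ℂ SA) : Set A) := hA a
    have h2 : (E i j a : M) ∈ closure ((E i j : A →L[ℂ] M) '' ↑(Submodule.span ℂ SA)) :=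
      image_closure_subset_closure_image (E i j).continuous ⟨a, h1, rfl⟩
    refine closure_mono ?_ h2
    rintro _ ⟨x, hx, rfl⟩
    have hmap : Submodule.map ((E i j : A →L[ℂ] M) : A →ₗ[ℂ] M) (Submodule.span ℂ SA)
        ≤ Submodule.span ℂ SM := by
      rw [Submodule.map_span]
      refine Submodule.span_le.2 ?_
      rintro _ ⟨p, hp, rfl⟩
      exact key i j p hp
    exact hmap ⟨x, hx, rfl⟩
  -- assemble
  intro x
  have hx : x = ∑ i : Fin n, ∑ j : Fin n, Matrix.single i j (x i j) :=
    matrix_eq_sum_single x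
  rw [← Submodule.topologicalClosure_coe, hx]
  refine SetLike.mem_coe.2 (Submodule.sum_mem _ fun i _ => Submodule.sum_mem _ fun j _ => ?_)
  have := aux i j (x i j)
  rw [← Submodule.topologicalClosure_coe] at this
  exact SetLike.mem_coe.1 this
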